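/- Let x : Fin N → ℝ be canonical with N ≥ 4, and let j be an inner vertex with degree 2 in HVG(x). Then the two neighbors of j are j-1 and j+1, and moreover x j < x (j-1) and x j < x (j+1) (j is a local minimum), and j-1 is adjacent to j+1 in HVG(x). -/

import Mathlib

/-- The horizontal visibility graph of a sequence `x : Fin N → ℝ`:
`a < b` are adjacent iff `x k < min (x a) (x b)` for all `a < k < b`. -/
def HVG {N : ℕ} (x : Fin N → ℝ) : SimpleGraph (Fin N) where
  Adj a b := (a < b ∧ ∀ k, a < k → k < b → x k < min (x a) (x b)) ∨
             (b < a ∧ ∀ k, b < k → k < a → x k < min (x b) (x a))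
  symm := ⟨by intro a b h; tauto⟩
  loopless := ⟨by intro a h; rcases h with ⟨h, -⟩ | ⟨h, -⟩ <;> exact lt_irrefl a h⟩

/-- Degree of a vertex in the HVG. -/
noncomputable def hvgDegree {N : ℕ} (x : Fin N → ℝ) (v : Fin N) : ℕ :=
  Nat.card {w : Fin N // (HVG x).Adj v w}

lemma hvg_adj_consec {N : ℕ} (x : Fin N → ℝ) (a b : Fin N) (h : (a : ℕ) + 1 = (b : ℕ)) :
    (HVG x).Adj a b := by
  left
  refine ⟨Fin.lt_def.mpr (by omega), fun k hk1 hk2 => ?_⟩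
  rw [Fin.lt_def] at hk1 hk2
  omega

set_option maxHeartbeats 2000000 in
theorem hvg_degree_two_local_min {N : ℕ} (hN : 4 ≤ N) (x : Fin N → ℝ)
    (hmax : ∀ k : Fin N, 0 < (k : ℕ) → (k : ℕ) < N - 1 →
      x k < min (x ⟨0, by omega⟩) (x ⟨N - 1, by omega⟩))
    (hinj : ∀ k l : Fin N, 0 < (k : ℕ) → (k : ℕ) < N - 1 →
      0 < (l : ℕ) → (l : ℕ) < N - 1 → x k = x l → k = l)
    (j : Fin N) (hj0 : 0 < (j : ℕ)) (hjN : (j : ℕ) < N - 1)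
    (hdeg : hvgDegree x j = 2) :
    (∀ w : Fin N, (HVG x).Adj j w ↔
      (w = ⟨(j : ℕ) - 1, by omega⟩ ∨ w = ⟨(j : ℕ) + 1, by omega⟩)) ∧
    x j < x ⟨(j : ℕ) - 1, by omega⟩ ∧ x j < x ⟨(j : ℕ) + 1, by omega⟩ ∧
    (HVG x).Adj ⟨(j : ℕ) - 1, by omega⟩ ⟨(j : ℕ) + 1, by omega⟩ := by
  classical
  have hNpos : 0 < N := by omega
  set jm : Fin N := ⟨(j : ℕ) - 1, by omega⟩ with hjm
  set jp : Fin N := ⟨(j : ℕ) + 1, by omega⟩ with hjp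
  have hadj1 : (HVG x).Adj j jm := ((HVG x).adj_symm (hvg_adj_consec x jm j (by show (j : ℕ) - 1 + 1 = (j : ℕ); omega)))
  have hadj2 : (HVG x).Adj j jp := hvg_adj_consec x j jp rfl
  have hne : jm ≠ jp := by
    simp only [hjm, hjp, Fin.mk.injEq, ne_eq]
    omega
  -- characterize neighbor set
  have hS : {w : Fin N | (HVG x).Adj j w} = {jm, jp} := by
    have hsub : {jm, jp} ⊆ {w : Fin N | (HVG x).Adj j w} := by
      intro w hw
      rcases hw with h | h
      · simpa [h] using hadj1
      · simp only [Set.mem_singleton_iff] at h; simpa [h] using hadj2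
    have hcard : ({w : Fin N | (HVG x).Adj j w}).ncard = 2 := by
      rw [← Nat.card_coe_set_eq]
      exact hdeg
    symm
    apply Set.eq_of_subset_of_ncard_le hsub
    rw [hcard, Set.ncard_pair hne]
  have hchar : ∀ w : Fin N, (HVG x).Adj j w ↔ (w = jm ∨ w = jp) := by
    simp only [Set.ext_iff, Set.mem_setOf_eq, Set.mem_insert_iff,
      Set.mem_singleton_iff] at hS
    exact hS
  -- boundary values exceed x j
  have h0 : x j < x ⟨0, by omega⟩ := lt_of_lt_of_le (hmax j hj0 hjN) (min_le_left _ _)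
  have hN1 : x j < x ⟨N - 1, by omega⟩ := lt_of_lt_of_le (hmax j hj0 hjN) (min_le_right _ _)
  -- x j < x jm
  have hlm : x j < x jm := by
    by_contra hle
    push_neg at hle
    have hlt : x jm < x j := by
      rcases lt_or_eq_of_le hle with h | h
      · exact h
      · by_cases h1 : (jm : ℕ) = 0
        · have hjm0 : jm = ⟨0, by omega⟩ := by ext; exact h1
          rw [hjm0] at h; exact absurd h (ne_of_gt h0)
        · exact absurd (hinj jm j (by omega) (by simp only [hjm]; omega) hj0 hjN h)
            (by simp only [hjm, ne_eq, Fin.ext_iff]; omega)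
    obtain ⟨i, hit, hmaxi⟩ := Finset.exists_max_image
      (Finset.univ.filter fun i : Fin N => i < j ∧ x j < x i) (fun i => (i : ℕ))
      ⟨⟨0, by omega⟩, by
        simp only [Finset.mem_filter, Finset.mem_univ, true_and]
        exact ⟨Fin.lt_def.mpr (by simpa using hj0), h0⟩⟩
    simp only [Finset.mem_filter, Finset.mem_univ, true_and] at hit
    obtain ⟨hij, hxi⟩ := hit
    have hadji : (HVG x).Adj i j := by
      left
      refine ⟨hij, fun k hk1 hk2 => ?_⟩
      have hk1' := Fin.lt_def.mp hk1
      have hk2' := Fin.lt_def.mp hk2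
      have hkle : x k ≤ x j := by
        by_contra hk
        push_neg at hk
        have := hmaxi k (by
          simp only [Finset.mem_filter, Finset.mem_univ, true_and]
          exact ⟨hk2, hk⟩)
        omega
      have hklt : x k < x j := by
        rcases lt_or_eq_of_le hkle with h | h
        · exact h
        · exfalso
          have := hinj k j (by omega) (by omega) hj0 hjN h
          rw [Fin.ext_iff] at this; omega
      exact lt_min (lt_trans hklt hxi) hklt
    rcases (hchar i).mp ((HVG x).adj_symm hadji) with h | h
    · rw [h] at hxi; exact absurd hxi (not_lt.mpr (le_of_lt hlt))
    · rw [h, Fin.lt_def] at hij; simp only [hjp] at hij; omega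
  -- x j < x jp
  have hlp : x j < x jp := by
    by_contra hle
    push_neg at hle
    have hlt : x jp < x j := by
      rcases lt_or_eq_of_le hle with h | h
      · exact h
      · by_cases h1 : (jp : ℕ) = N - 1
        · have hjp1 : jp = ⟨N - 1, by omega⟩ := by ext; exact h1
          rw [hjp1] at h; exact absurd h (ne_of_gt hN1)
        · exact absurd (hinj jp j (by simp only [hjp]; omega)
            (by simp only [hjp] at h1 ⊢; omega) hj0 hjN h)
            (by simp only [hjp, ne_eq, Fin.ext_iff]; omega)
    obtain ⟨i, hit, hmini⟩ := Finset.exists_min_image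
      (Finset.univ.filter fun i : Fin N => j < i ∧ x j < x i) (fun i => (i : ℕ))
      ⟨⟨N - 1, by omega⟩, by
        simp only [Finset.mem_filter, Finset.mem_univ, true_and]
        exact ⟨Fin.lt_def.mpr (by simpa using hjN), hN1⟩⟩
    simp only [Finset.mem_filter, Finset.mem_univ, true_and] at hit
    obtain ⟨hij, hxi⟩ := hit
    have hadji : (HVG x).Adj j i := by
      left
      refine ⟨hij, fun k hk1 hk2 => ?_⟩
      have hk1' := Fin.lt_def.mp hk1
      have hk2' := Fin.lt_def.mp hk2
      have hkle : x k ≤ x j := by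
        by_contra hk
        push_neg at hk
        have := hmini k (by
          simp only [Finset.mem_filter, Finset.mem_univ, true_and]
          exact ⟨hk1, hk⟩)
        omega
      have hklt : x k < x j := by
        rcases lt_or_eq_of_le hkle with h | h
        · exact h
        · exfalso
          have hiN : (i : ℕ) ≤ N - 1 := by omega
          have := hinj k j (by omega) (by omega) hj0 hjN h
          rw [Fin.ext_iff] at this; omega
      exact lt_min hklt (lt_trans hklt hxi)
    rcases (hchar i).mp hadji with h | h
    · rw [h, Fin.lt_def] at hij; simp only [hjm] at hij; omega
    · rw [h] at hxi; exact absurd hxi (not_lt.mpr (le_of_lt hlt))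
  refine ⟨hchar, hlm, hlp, ?_⟩
  left
  refine ⟨by rw [Fin.lt_def]; simp [hjm, hjp], fun k hk1 hk2 => ?_⟩
  have hk1' := Fin.lt_def.mp hk1
  have hk2' := Fin.lt_def.mp hk2
  simp only [hjm, hjp] at hk1' hk2'
  have : k = j := by rw [Fin.ext_iff]; omega
  rw [this]
  exact lt_min hlm hlp
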